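/- Every locally finite group, endowed with any Hausdorff group topology (in fact any group topology in which finite subgroups are discrete—for instance the discrete topology), satisfies: for all compact $A, B$ and elements $a, b, c$, the inclusions $aA \cup bB \subseteq A \cup B$ and $aA \cap bB \subseteq c(A \cap B)$ imply $aA \cup bB = A \cup B$ and $aA \cap bB = c(A \cap B)$. In particular, every locally finite topological group whose finite subgroups are discrete is 2-swelling. -/

import Mathlib

open Pointwise

lemma key_fin {G : Type*} [Group G] (A B : Set G) (hA : A.Finite) (hB : B.Finite)
    (a b c : G)
    (h1 : a • A ∪ b • B ⊆ A ∪ B) (h2 : a • A ∩ b • B ⊆ c • (A ∩ B)) :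
    a • A ∪ b • B = A ∪ B ∧ a • A ∩ b • B = c • (A ∩ B) := by
  have hAB : (A ∪ B).Finite := hA.union hB
  have hsA : (a • A).Finite := hA.smul_set
  have hsB : (b • B).Finite := hB.smul_set
  have e1 : (a • A ∪ b • B).ncard + (a • A ∩ b • B).ncard = A.ncard + B.ncard := by
    rw [Set.ncard_union_add_ncard_inter _ _ hsA hsB, Set.ncard_smul_set, Set.ncard_smul_set]
  have e2 : (A ∪ B).ncard + (A ∩ B).ncard = A.ncard + B.ncard :=
    Set.ncard_union_add_ncard_inter _ _ hA hB
  have hle : (a • A ∩ b • B).ncard ≤ (A ∩ B).ncard := by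
    calc (a • A ∩ b • B).ncard ≤ (c • (A ∩ B)).ncard :=
          Set.ncard_le_ncard h2 (hA.inter_of_left B).smul_set
      _ = (A ∩ B).ncard := Set.ncard_smul_set _ _
  have hge : (A ∪ B).ncard ≤ (a • A ∪ b • B).ncard := by omega
  have eq1 : a • A ∪ b • B = A ∪ B := Set.eq_of_subset_of_ncard_le h1 hge hAB
  refine ⟨eq1, ?_⟩
  have h3 : (a • A ∪ b • B).ncard = (A ∪ B).ncard := by rw [eq1]
  have : (c • (A ∩ B)).ncard ≤ (a • A ∩ b • B).ncard := by
    rw [Set.ncard_smul_set]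
    omega
  exact Set.eq_of_subset_of_ncard_le h2 this ((hA.inter_of_left B).smul_set)

theorem stmt_16 {G : Type*} [Group G] [TopologicalSpace G] [IsTopologicalGroup G]
    (hlf : ∀ S : Set G, S.Finite → ((Subgroup.closure S : Subgroup G) : Set G).Finite)
    (hfd : ∀ H : Subgroup G, (H : Set G).Finite → DiscreteTopology H)
    (A B : Set G) (hA : IsCompact A) (hB : IsCompact B) (a b c : G)
    (h1 : a • A ∪ b • B ⊆ A ∪ B) (h2 : a • A ∩ b • B ⊆ c • (A ∩ B)) :
    a • A ∪ b • B = A ∪ B ∧ a • A ∩ b • B = c • (A ∩ B) := by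
  set H : Subgroup G := Subgroup.closure {a, b, c} with hH
  have hHfin : ((H : Set G)).Finite := hlf _ (Set.toFinite _)
  have haH : a ∈ H := Subgroup.subset_closure (by simp)
  have hbH : b ∈ H := Subgroup.subset_closure (by simp)
  have hcH : c ∈ H := Subgroup.subset_closure (by simp)
  -- localize at each point
  have main : ∀ x : G, ∃ K : Set G, x ∈ K ∧
      (a • A ∪ b • B) ∩ K = (A ∪ B) ∩ K ∧
      (a • A ∩ b • B) ∩ K = (c • (A ∩ B)) ∩ K := by
    intro x
    refine ⟨(H : Set G) * {x}, ⟨1, H.one_mem, x, rfl, one_mul x⟩, ?_⟩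
    have hKfin : ((H : Set G) * ({x} : Set G)).Finite := hHfin.mul (Set.finite_singleton x)
    have hsmulK : ∀ g : G, g ∈ H → g • ((H : Set G) * {x}) = (H : Set G) * {x} := by
      intro g hg
      ext y
      simp only [Set.mem_smul_set, Set.mem_mul, Set.mem_singleton_iff, exists_eq_left,
        smul_eq_mul]
      constructor
      · rintro ⟨z, ⟨h, hh, rfl⟩, rfl⟩
        exact ⟨g * h, H.mul_mem hg hh, mul_assoc g h x⟩
      · rintro ⟨h, hh, rfl⟩
        exact ⟨g⁻¹ * (h * x), ⟨g⁻¹ * h, H.mul_mem (H.inv_mem hg) hh, by group⟩, by group⟩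
    set K := (H : Set G) * ({x} : Set G) with hK
    have hAK : (A ∩ K).Finite := hKfin.inter_of_right A
    have hBK : (B ∩ K).Finite := hKfin.inter_of_right B
    have hsa : a • (A ∩ K) = (a • A) ∩ K := by
      rw [Set.smul_set_inter, hsmulK a haH]
    have hsb : b • (B ∩ K) = (b • B) ∩ K := by
      rw [Set.smul_set_inter, hsmulK b hbH]
    have hsc : c • (A ∩ K ∩ (B ∩ K)) = (c • (A ∩ B)) ∩ K := by
      have hr : A ∩ K ∩ (B ∩ K) = (A ∩ B) ∩ K := by
        ext y; simp only [Set.mem_inter_iff]; tauto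
      rw [hr, Set.smul_set_inter, hsmulK c hcH]
    have hunion : a • (A ∩ K) ∪ b • (B ∩ K) = (a • A ∪ b • B) ∩ K := by
      rw [hsa, hsb, Set.union_inter_distrib_right]
    have hinter : a • (A ∩ K) ∩ b • (B ∩ K) = (a • A ∩ b • B) ∩ K := by
      rw [hsa, hsb]; ext y; simp only [Set.mem_inter_iff]; tauto
    have h1' : a • (A ∩ K) ∪ b • (B ∩ K) ⊆ (A ∩ K) ∪ (B ∩ K) := by
      rw [hunion, ← Set.union_inter_distrib_right]
      exact Set.inter_subset_inter_left _ h1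
    have h2' : a • (A ∩ K) ∩ b • (B ∩ K) ⊆ c • ((A ∩ K) ∩ (B ∩ K)) := by
      rw [hinter, hsc]
      exact Set.inter_subset_inter_left _ h2
    obtain ⟨e1, e2⟩ := key_fin (A ∩ K) (B ∩ K) hAK hBK a b c h1' h2'
    rw [hunion, ← Set.union_inter_distrib_right] at e1
    rw [hinter, hsc] at e2
    exact ⟨e1, e2⟩
  constructor
  · apply Set.Subset.antisymm h1
    intro x hx
    obtain ⟨K, hxK, e1, _⟩ := main x
    have : x ∈ (a • A ∪ b • B) ∩ K := by rw [e1]; exact ⟨hx, hxK⟩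
    exact this.1
  · apply Set.Subset.antisymm h2
    intro x hx
    obtain ⟨K, hxK, _, e2⟩ := main x
    have : x ∈ (a • A ∩ b • B) ∩ K := by rw [e2]; exact ⟨hx, hxK⟩
    exact this.1
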